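/- Let N ≥ 1, let G be a closed subgroup of U_N with Haar probability measure μ, let I ⊆ {1,…,N} be nonempty, let k ≥ 1, and let e = (e_1,…,e_k) be a word with letters in {∘,•}. For multi-indices i, j ∈ {1,…,N}^k, set P_{i,j} = ∫_G ∏_{a=1}^k g_{i_a j_a}^{e_a} dμ(g) and P^I_i = |I|^{-k/2} Σ_{j∈I^k} P_{i,j}. Then for every point x in the orbit G·ξ_I = {h ξ_I : h ∈ G} and every i ∈ {1,…,N}^k one has Σ_{j∈{1,…,N}^k} P_{i,j} ∏_{a=1}^k x_{j_a}^{e_a} = P^I_i, where for a scalar x, x^∘ = x and x^• = conj(x). -/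

import Mathlib

open Matrix MeasureTheory

/-- `x^∘ = x` and `x^• = conj x`, for a scalar `x` (here `true` encodes `•`). -/
noncomputable def dec (b : Bool) (z : ℂ) : ℂ := if b then (starRingEnd ℂ) z else z

/-- The unit vector `ξ_I ∈ ℂ^N`, with coordinates `1/√|I|` on `I` and `0` elsewhere. -/
noncomputable def xiI (N : ℕ) (I : Finset (Fin N)) : Fin N → ℂ :=
  fun i => if i ∈ I then ((1 / Real.sqrt I.card : ℝ) : ℂ) else 0

/-- We equip a closed subgroup `G ⊆ U_N` with its Borel σ-algebra. -/
noncomputable instance instMeasSubgroupUG {N : ℕ} (G : Subgroup (Matrix.unitaryGroup (Fin N) ℂ)) :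
    MeasurableSpace G := borel G

instance instBorelSubgroupUG {N : ℕ} (G : Subgroup (Matrix.unitaryGroup (Fin N) ℂ)) :
    BorelSpace G := ⟨rfl⟩

lemma dec_mul (b : Bool) (z w : ℂ) : dec b (z * w) = dec b z * dec b w := by
  unfold dec; cases b <;> simp

lemma dec_sum {ι : Type*} (b : Bool) (s : Finset ι) (f : ι → ℂ) :
    dec b (∑ i ∈ s, f i) = ∑ i ∈ s, dec b (f i) := by
  unfold dec; cases b <;> simp

lemma dec_real (b : Bool) (r : ℝ) : dec b ((r : ℂ)) = (r : ℂ) := by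
  unfold dec; cases b <;> simp

lemma norm_dec (b : Bool) (z : ℂ) : ‖dec b z‖ = ‖z‖ := by
  unfold dec; cases b <;> simp

lemma continuous_dec (b : Bool) : Continuous (dec b) := by
  unfold dec; cases b
  · simpa using continuous_id'
  · simpa using (continuous_star : Continuous (star : ℂ → ℂ))

/-- Classical case of Proposition 1.4: with `P_{i,j} = ∫_G ∏_a g_{i_a j_a}^{e_a} dμ(g)` and
`P^I_i = |I|^{-k/2} Σ_{j∈I^k} P_{i,j}`, every point `x` of the orbit `G·ξ_I` satisfies the moment
relations `Σ_j P_{i,j} ∏_a x_{j_a}^{e_a} = P^I_i`. -/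
theorem stmt10 (N : ℕ) (hN : 1 ≤ N) (G : Subgroup (Matrix.unitaryGroup (Fin N) ℂ))
    (hG : IsClosed (G : Set (Matrix.unitaryGroup (Fin N) ℂ)))
    (μ : Measure G) [IsProbabilityMeasure μ]
    [μ.IsMulLeftInvariant] [μ.IsMulRightInvariant]
    (I : Finset (Fin N)) (hI : I.Nonempty)
    (k : ℕ) (hk : 1 ≤ k) (e : Fin k → Bool)
    (P : Matrix (Fin k → Fin N) (Fin k → Fin N) ℂ)
    (hP : ∀ i j : Fin k → Fin N, P i j = ∫ g : G, ∏ a, dec (e a)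
      (((g : Matrix.unitaryGroup (Fin N) ℂ) : Matrix (Fin N) (Fin N) ℂ) (i a) (j a)) ∂μ)
    (PI : (Fin k → Fin N) → ℂ)
    (hPI : ∀ i : Fin k → Fin N, PI i = ((1 / Real.sqrt ((I.card : ℝ) ^ k) : ℝ) : ℂ) *
      ∑ j : Fin k → {y // y ∈ I}, P i (fun a => (j a : Fin N))) :
    ∀ x : Fin N → ℂ, (∃ h ∈ G, ((h : Matrix (Fin N) (Fin N) ℂ)) *ᵥ xiI N I = x) →
      ∀ i : Fin k → Fin N,
        ∑ j : Fin k → Fin N, P i j * ∏ a, dec (e a) (x (j a)) = PI i := by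
  rintro x ⟨h, hh, hx⟩ i
  set c : ℝ := 1 / Real.sqrt I.card with hc
  -- the basic entry functions are integrable
  have hcont : ∀ (j : Fin k → Fin N), Continuous (fun g : G =>
      ∏ a, dec (e a) (((g : Matrix.unitaryGroup (Fin N) ℂ) :
        Matrix (Fin N) (Fin N) ℂ) (i a) (j a))) := by
    intro j
    refine continuous_finset_prod _ (fun a _ => ?_)
    exact (continuous_dec (e a)).comp
      ((continuous_apply (j a)).comp ((continuous_apply (i a)).comp
        ((continuous_subtype_val (p := (· ∈ Matrix.unitaryGroup (Fin N) ℂ))).comp continuous_subtype_val)))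
  have hint : ∀ (j : Fin k → Fin N), Integrable (fun g : G =>
      ∏ a, dec (e a) (((g : Matrix.unitaryGroup (Fin N) ℂ) :
        Matrix (Fin N) (Fin N) ℂ) (i a) (j a))) μ := by
    intro j
    refine Integrable.mono' (integrable_const (1 : ℝ)) ((hcont j).aestronglyMeasurable)
      (Filter.Eventually.of_forall (fun g => ?_))
    calc ‖∏ a, dec (e a) (((g : Matrix.unitaryGroup (Fin N) ℂ) :
          Matrix (Fin N) (Fin N) ℂ) (i a) (j a))‖
        = ∏ a, ‖dec (e a) (((g : Matrix.unitaryGroup (Fin N) ℂ) :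
          Matrix (Fin N) (Fin N) ℂ) (i a) (j a))‖ := norm_prod _ _
      _ ≤ 1 := by
          refine Finset.prod_le_one (fun a _ => norm_nonneg _) (fun a _ => ?_)
          rw [norm_dec]
          exact entry_norm_bound_of_unitary (g : Matrix.unitaryGroup (Fin N) ℂ).2 _ _
  -- the key algebraic identity: expand the product of mulVec entries
  have key : ∀ (g : Matrix (Fin N) (Fin N) ℂ) (v : Fin N → ℂ),
      ∏ a, dec (e a) ((g *ᵥ v) (i a)) =
        ∑ j : Fin k → Fin N, (∏ a, dec (e a) (g (i a) (j a))) * ∏ a, dec (e a) (v (j a)) := by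
    intro g v
    have : ∀ a : Fin k, dec (e a) ((g *ᵥ v) (i a)) =
        ∑ l : Fin N, dec (e a) (g (i a) l) * dec (e a) (v l) := by
      intro a
      simp only [Matrix.mulVec, dotProduct, dec_sum, dec_mul]
    rw [Finset.prod_congr rfl (fun a _ => this a),
      Finset.prod_univ_sum (fun _ => (Finset.univ : Finset (Fin N)))]
    rw [Fintype.piFinset_univ]
    exact Finset.sum_congr rfl (fun j _ => Finset.prod_mul_distrib)
  -- Step A: LHS = ∫ ∏ dec ((g *ᵥ x) (i a))
  have stepA : ∑ j : Fin k → Fin N, P i j * ∏ a, dec (e a) (x (j a)) =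
      ∫ g : G, ∏ a, dec (e a) ((((g : Matrix.unitaryGroup (Fin N) ℂ) :
        Matrix (Fin N) (Fin N) ℂ) *ᵥ x) (i a)) ∂μ := by
    have : ∀ j : Fin k → Fin N, P i j * ∏ a, dec (e a) (x (j a)) =
        ∫ g : G, (∏ a, dec (e a) (((g : Matrix.unitaryGroup (Fin N) ℂ) :
          Matrix (Fin N) (Fin N) ℂ) (i a) (j a))) * ∏ a, dec (e a) (x (j a)) ∂μ := by
      intro j; rw [hP i j, ← integral_mul_const]
    rw [Finset.sum_congr rfl (fun j _ => this j),
      ← integral_finset_sum _ (fun j _ => (hint j).mul_const _)]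
    exact integral_congr_ae (Filter.Eventually.of_forall (fun g => (key _ x).symm))
  -- Step B: use right invariance to replace x by ξ_I
  have stepB : ∫ g : G, ∏ a, dec (e a) ((((g : Matrix.unitaryGroup (Fin N) ℂ) :
        Matrix (Fin N) (Fin N) ℂ) *ᵥ x) (i a)) ∂μ =
      ∫ g : G, ∏ a, dec (e a) ((((g : Matrix.unitaryGroup (Fin N) ℂ) :
        Matrix (Fin N) (Fin N) ℂ) *ᵥ xiI N I) (i a)) ∂μ := by
    haveI hcm : ContinuousMul G := ⟨Continuous.subtype_mk
      ((continuous_subtype_val.comp continuous_fst).mul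
        (continuous_subtype_val.comp continuous_snd)) _⟩
    haveI : MeasurableMul G := ContinuousMul.measurableMul
    have := integral_mul_right_eq_self (μ := μ)
      (fun g : G => ∏ a, dec (e a) ((((g : Matrix.unitaryGroup (Fin N) ℂ) :
        Matrix (Fin N) (Fin N) ℂ) *ᵥ xiI N I) (i a))) ⟨h, hh⟩
    rw [← this]
    refine integral_congr_ae (Filter.Eventually.of_forall (fun g => ?_))
    have hmv : ((((g * (⟨h, hh⟩ : G) : G) : Matrix.unitaryGroup (Fin N) ℂ) :
        Matrix (Fin N) (Fin N) ℂ)) *ᵥ xiI N I =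
        (((g : Matrix.unitaryGroup (Fin N) ℂ) : Matrix (Fin N) (Fin N) ℂ)) *ᵥ x := by
      rw [← hx, Matrix.mulVec_mulVec]
      rfl
    simp only [hmv]
  -- Step C: compute the ξ_I integral
  have hcard : (0 : ℝ) < I.card := by exact_mod_cast Finset.card_pos.mpr hI
  have stepC : ∫ g : G, ∏ a, dec (e a) ((((g : Matrix.unitaryGroup (Fin N) ℂ) :
        Matrix (Fin N) (Fin N) ℂ) *ᵥ xiI N I) (i a)) ∂μ = PI i := by
    have expand : ∀ g : Matrix (Fin N) (Fin N) ℂ,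
        ∏ a, dec (e a) ((g *ᵥ xiI N I) (i a)) =
        ((c : ℂ)) ^ k * ∑ j : Fin k → {y // y ∈ I}, ∏ a, dec (e a) (g (i a) (j a : Fin N)) := by
      intro g
      have h1 : ∀ a : Fin k, dec (e a) ((g *ᵥ xiI N I) (i a)) =
          (c : ℂ) * ∑ l : {y // y ∈ I}, dec (e a) (g (i a) (l : Fin N)) := by
        intro a
        have : (g *ᵥ xiI N I) (i a) = ∑ l : {y // y ∈ I}, g (i a) (l : Fin N) * (c : ℂ) := by
          simp only [Matrix.mulVec, dotProduct, xiI, mul_ite, mul_zero]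
          rw [Finset.sum_ite_mem, Finset.univ_inter, hc]
          exact (Finset.sum_coe_sort I (fun l => g (i a) l * ((1 / Real.sqrt I.card : ℝ) : ℂ))).symm
        rw [this, dec_sum, Finset.mul_sum]
        refine Finset.sum_congr rfl (fun l _ => ?_)
        rw [dec_mul, dec_real, mul_comm]
      rw [Finset.prod_congr rfl (fun a _ => h1 a), Finset.prod_mul_distrib,
        Finset.prod_const, Finset.card_univ, Fintype.card_fin,
        Finset.prod_univ_sum (fun _ => (Finset.univ : Finset {y // y ∈ I}))]
      rw [Fintype.piFinset_univ]
    have hsqrt : Real.sqrt ((I.card : ℝ) ^ k) = (Real.sqrt I.card) ^ k := by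
      rw [← Real.sqrt_sq (by positivity : (0:ℝ) ≤ (Real.sqrt I.card) ^ k)]
      congr 1
      rw [← pow_mul, mul_comm, pow_mul, Real.sq_sqrt hcard.le]
    have hck : ((1 / Real.sqrt ((I.card : ℝ) ^ k) : ℝ) : ℂ) = ((c : ℂ)) ^ k := by
      rw [hsqrt, hc]
      push_cast
      rw [div_pow, one_pow]
    rw [hPI i, hck]
    calc ∫ g : G, ∏ a, dec (e a) ((((g : Matrix.unitaryGroup (Fin N) ℂ) :
          Matrix (Fin N) (Fin N) ℂ) *ᵥ xiI N I) (i a)) ∂μ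
        = ∫ g : G, ((c : ℂ)) ^ k * ∑ j : Fin k → {y // y ∈ I},
            ∏ a, dec (e a) (((g : Matrix.unitaryGroup (Fin N) ℂ) :
              Matrix (Fin N) (Fin N) ℂ) (i a) (j a : Fin N)) ∂μ := by
          exact integral_congr_ae (Filter.Eventually.of_forall (fun g => expand _))
      _ = ((c : ℂ)) ^ k * ∑ j : Fin k → {y // y ∈ I}, P i (fun a => (j a : Fin N)) := by
          rw [integral_const_mul, integral_finset_sum _
            (fun j _ => hint (fun a => (j a : Fin N)))]
          congr 1
          exact Finset.sum_congr rfl (fun j _ => (hP i _).symm)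
  rw [stepA, stepB, stepC]
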